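/- Let n ≥ 1, let B be a real symmetric positive definite 2n × 2n matrix, and let J be the standard symplectic 2n × 2n matrix (in block form J = [[0, −I_n],[I_n, 0]]). Then every eigenvalue of the matrix JB (equivalently, every root in ℂ of the characteristic polynomial of JB) is purely imaginary and nonzero. -/

import Mathlib

open Matrix Polynomial

/-- From a root of the charpoly over a field, extract an eigenvector. -/
lemma exists_eigenvector_of_isRoot_charpoly
    {m : Type*} [Fintype m] [DecidableEq m]
    (M : Matrix m m ℂ) (μ : ℂ) (h : M.charpoly.IsRoot μ) :
    ∃ v : m → ℂ, v ≠ 0 ∧ M *ᵥ v = μ • v := by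
  have hdet : (Matrix.scalar m μ - M).det = 0 := by
    have := h
    rw [Polynomial.IsRoot, Matrix.charpoly, eval_det,
      Matrix.matPolyEquiv_charmatrix] at this
    simpa using this
  obtain ⟨v, hv, hMv⟩ := (Matrix.exists_mulVec_eq_zero_iff).2 hdet
  refine ⟨v, hv, ?_⟩
  have h1 : (Matrix.scalar m μ) *ᵥ v - M *ᵥ v = 0 := by
    rw [← Matrix.sub_mulVec, hMv]
  have h2 : (Matrix.scalar m μ) *ᵥ v = μ • v := by
    ext i; simp [Matrix.scalar, Matrix.smul_mulVec, Matrix.mulVec_one, Matrix.mulVec_diagonal]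
  rw [h2, sub_eq_zero] at h1
  exact h1.symm


lemma star_dotProduct_mulVec_self {m : Type*} [Fintype m]
    (M : Matrix m m ℂ) (a : m → ℂ) :
    star (star a ⬝ᵥ (M *ᵥ a)) = star a ⬝ᵥ (Mᴴ *ᵥ a) := by
  calc star (star a ⬝ᵥ (M *ᵥ a)) = star (M *ᵥ a) ⬝ᵥ a := by
        rw [Matrix.star_dotProduct, star_star]
    _ = (star a ᵥ* Mᴴ) ⬝ᵥ a := by rw [Matrix.star_mulVec]
    _ = star a ⬝ᵥ (Mᴴ *ᵥ a) := (Matrix.dotProduct_mulVec _ _ _).symm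

theorem eigenvalues_JB_purely_imaginary
    (n : ℕ) (hn : 1 ≤ n)
    (B : Matrix (Fin n ⊕ Fin n) (Fin n ⊕ Fin n) ℝ)
    (hB : B.PosDef)
    (J : Matrix (Fin n ⊕ Fin n) (Fin n ⊕ Fin n) ℝ)
    (hJ : J = Matrix.fromBlocks 0 (-1) 1 0) :
    ∀ μ : ℂ, ((J * B).charpoly.map (algebraMap ℝ ℂ)).IsRoot μ → μ.re = 0 ∧ μ ≠ 0 := by
  intro μ hμ
  set f := algebraMap ℝ ℂ with hf
  set Jc : Matrix (Fin n ⊕ Fin n) (Fin n ⊕ Fin n) ℂ := J.map f with hJc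
  set Bc : Matrix (Fin n ⊕ Fin n) (Fin n ⊕ Fin n) ℂ := B.map f with hBc
  have hroot : ((J * B).map f).charpoly.IsRoot μ := by
    rw [Matrix.charpoly_map]; exact hμ
  obtain ⟨v, hv, hMv⟩ := exists_eigenvector_of_isRoot_charpoly _ μ hroot
  have hmul : (J * B).map f = Jc * Bc := Matrix.map_mul
  rw [hmul] at hMv
  set w : (Fin n ⊕ Fin n) → ℂ := Bc *ᵥ v with hw
  have hJw : Jc *ᵥ w = μ • v := by
    rw [hw, Matrix.mulVec_mulVec]; exact hMv
  -- Bc is Hermitian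
  have hBcH : Bcᴴ = Bc := by
    ext i j
    have h1 : B j i = B i j := by
      have := congrFun (congrFun hB.1 i) j
      simpa [Matrix.conjTranspose_apply] using this
    simp [hBc, hf, Matrix.conjTranspose_apply, Matrix.map_apply, Complex.coe_algebraMap, Complex.conj_ofReal, h1]
  -- Jc is skew-Hermitian
  have hJcH : Jcᴴ = -Jc := by
    have hJT : Jᵀ = -J := by
      rw [hJ]
      ext i j
      rcases i with i | i <;> rcases j with j | j <;>
        simp [Matrix.fromBlocks, Matrix.transpose_apply, Matrix.one_apply, eq_comm]
    ext i j
    have h1 : J j i = -J i j := by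
      have := congrFun (congrFun hJT i) j
      simpa [Matrix.transpose_apply] using this
    simp [hJc, hf, Matrix.conjTranspose_apply, Matrix.map_apply, Complex.coe_algebraMap, Complex.conj_ofReal, h1]
  set c : ℂ := star v ⬝ᵥ w with hc
  -- c is real and positive
  have hcre : 0 < c.re := by
    set x : (Fin n ⊕ Fin n) → ℝ := fun i => (v i).re with hx
    set y : (Fin n ⊕ Fin n) → ℝ := fun i => (v i).im with hy
    have hre : c.re = x ⬝ᵥ (B *ᵥ x) + y ⬝ᵥ (B *ᵥ y) := by
      simp only [hc, hw, dotProduct, Matrix.mulVec, Complex.re_sum,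
        Pi.star_apply, hBc, Matrix.map_apply, hf]
      rw [← Finset.sum_add_distrib]
      refine Finset.sum_congr rfl fun i _ => ?_
      simp only [Complex.mul_re, Complex.re_sum, Complex.im_sum, Finset.mul_sum,
        Finset.sum_mul, ← Finset.sum_add_distrib]
      refine Finset.sum_congr rfl fun j _ => ?_
      simp [Complex.mul_re, Complex.mul_im, hx, hy, Complex.conj_re, Complex.conj_im]
    have hxy : x ≠ 0 ∨ y ≠ 0 := by
      by_contra h
      push_neg at h
      apply hv
      funext i
      have h1 := congrFun h.1 i
      have h2 := congrFun h.2 i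
      exact Complex.ext (by simpa [hx] using h1) (by simpa [hy] using h2)
    have hBx : 0 ≤ x ⬝ᵥ (B *ᵥ x) := by simpa using hB.posSemidef.dotProduct_mulVec_nonneg x
    have hBy : 0 ≤ y ⬝ᵥ (B *ᵥ y) := by simpa using hB.posSemidef.dotProduct_mulVec_nonneg y
    rw [hre]
    rcases hxy with h | h
    · have : 0 < x ⬝ᵥ (B *ᵥ x) := by simpa using hB.dotProduct_mulVec_pos h
      linarith
    · have : 0 < y ⬝ᵥ (B *ᵥ y) := by simpa using hB.dotProduct_mulVec_pos h
      linarith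
  have hcne : c ≠ 0 := fun h => by simp [h] at hcre
  -- c is real : star c = c
  have hcstar : star c = c := by
    rw [hc, star_dotProduct_mulVec_self, hBcH]
  -- the skew quantity
  set d : ℂ := star w ⬝ᵥ (Jc *ᵥ w) with hd
  have hdstar : star d = -d := by
    rw [hd, star_dotProduct_mulVec_self, hJcH, Matrix.neg_mulVec, dotProduct_neg]
  have hdc : d = μ * c := by
    rw [hd, hJw, dotProduct_smul, smul_eq_mul]
    congr 1
    calc star w ⬝ᵥ v = star (star v ⬝ᵥ w) := by
          rw [Matrix.star_dotProduct]
      _ = c := by rw [← hc, hcstar]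
  -- purely imaginary
  have hre0 : μ.re = 0 := by
    have h1 : (starRingEnd ℂ) μ * c = -(μ * c) := by
      have := hdstar
      rw [hdc] at this
      simpa [star_mul', hcstar, mul_comm] using this
    have h2 : ((starRingEnd ℂ) μ + μ) * c = 0 := by ring_nf; ring_nf at h1; linear_combination h1
    have h3 : (starRingEnd ℂ) μ + μ = 0 := by
      rcases mul_eq_zero.mp h2 with h | h
      · exact h
      · exact absurd h hcne
    have h4 := congrArg Complex.re h3
    simp [Complex.add_re, Complex.conj_re] at h4
    linarith
  refine ⟨hre0, ?_⟩
  -- nonzero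
  intro hμ0
  subst hμ0
  have hw0 : Jc *ᵥ w = 0 := by simpa using hJw
  have hJJ : Jc * Jc = -1 := by
    have hJJR : J * J = -1 := by
      rw [hJ, Matrix.fromBlocks_multiply]
      simp [← Matrix.fromBlocks_one, Matrix.fromBlocks_neg]
    calc Jc * Jc = (J * J).map f := Matrix.map_mul.symm
      _ = (-1 : Matrix _ _ ℝ).map f := by rw [hJJR]
      _ = -1 := by
          ext i j
          by_cases h : i = j <;> simp [Matrix.map_apply, Matrix.one_apply, h]
  have hww : w = 0 := by
    have h1 : (Jc * Jc) *ᵥ w = 0 := by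
      rw [← Matrix.mulVec_mulVec, hw0, Matrix.mulVec_zero]
    rw [hJJ, Matrix.neg_mulVec, Matrix.one_mulVec, neg_eq_zero] at h1
    exact h1
  have : c = 0 := by rw [hc, hww, dotProduct_zero]
  exact hcne this
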